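/- Let H be the contraction hierarchy obtained from G by contracting vertices in a nested dissection order induced by a separator decomposition T (when a vertex is contracted, shortcut edges are added between all pairs of its remaining higher-ranked neighbors). Let X be a node of T and let u be the highest-ranked vertex in G_X. Then the boundary B(X) of G_X equals N_H^↑(u), the set of neighbors of u in H with rank higher than u. -/

import Mathlib

/-- `anc parent Z X`: node `X` is a (weak) ancestor of node `Z`. -/
def anc {ι : Type*} (parent : ι → ι) : ι → ι → Prop :=
  Relation.ReflTransGen (fun a b => parent a = b)

/-- Vertex set of the subgraph `G_X` induced by the subtree rooted at `X`. -/
def subVerts {V ι : Type*} (parent : ι → ι) (bag : ι → Set V) (X : ι) : Set V :=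
  {v | ∃ Z, anc parent Z X ∧ v ∈ bag Z}

lemma anc_trans {ι : Type*} {parent : ι → ι} {a b c : ι} (h : anc parent a b)
    (h' : anc parent b c) : anc parent a c := Relation.ReflTransGen.trans h h'

lemma subVerts_mono {V ι : Type*} {parent : ι → ι} {bag : ι → Set V} {X Y : ι}
    (h : anc parent X Y) : subVerts parent bag X ⊆ subVerts parent bag Y := by
  rintro v ⟨Z, hZ, hv⟩
  exact ⟨Z, anc_trans hZ h, hv⟩

/-- LCA lemma: if `Z` is not below `X` (both below `root`), then either `X` is below `Z`,
or there are distinct siblings `Y₁, Y₂` with `X` below `Y₁` and `Z` below `Y₂`. -/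
lemma lca_lemma {ι : Type*} (parent : ι → ι) (root : ι) (X : ι) :
    ∀ Z : ι, anc parent X root → anc parent Z root → ¬ anc parent Z X → ¬ anc parent X Z →
      ∃ W Y₁ Y₂, parent Y₁ = W ∧ parent Y₂ = W ∧ Y₁ ≠ Y₂ ∧
        anc parent X Y₁ ∧ anc parent Z Y₂ := by
  intro Z hX hZ
  induction hZ using Relation.ReflTransGen.head_induction_on with
  | refl => intro _ hXZ; exact absurd hX hXZ
  | head hstep htail ih =>
    rename_i Z Z'
    intro hZX hXZ
    -- `parent Z = Z'`, `anc Z' root`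
    have hZZ' : anc parent Z Z' := Relation.ReflTransGen.single hstep
    have hZ'X : ¬ anc parent Z' X := fun h => hZX (anc_trans hZZ' h)
    by_cases hXZ' : anc parent X Z'
    · -- the LCA is `Z'` itself
      have hXneZ' : X ≠ Z' := by
        rintro rfl; exact hZX hZZ'
      rcases (Relation.ReflTransGen.cases_tail hXZ') with h | ⟨Y₁, hXY₁, hpY₁⟩
      · exact absurd h.symm hXneZ'
      · refine ⟨Z', Y₁, Z, hpY₁, hstep, ?_, hXY₁, Relation.ReflTransGen.refl⟩
        rintro rfl; exact hXZ hXY₁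
    · obtain ⟨W, Y₁, Y₂, h1, h2, h3, h4, h5⟩ := ih hZ'X hXZ'
      exact ⟨W, Y₁, Y₂, h1, h2, h3, h4, anc_trans hZZ' h5⟩

/-- Along a walk ending at `w`, starting inside `S` with all non-`w` vertices either in `S`
or of low rank, if every edge leaving `S` goes to a high-rank vertex, then the predecessor
of `w` is in `S`. -/
lemma last_in_S {V : Type*} {G : SimpleGraph V} {S : Set V} {rank : V → ℕ} {r : ℕ}
    (hcross : ∀ a ∈ S, ∀ b, b ∉ S → G.Adj a b → r < rank b) :
    ∀ {a w : V} (p : G.Walk a w), w ∉ S → a ∈ S →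
      (∀ x ∈ p.support, x ≠ w → x ∈ S ∨ rank x < r) →
      ∃ v ∈ S, G.Adj v w := by
  intro a w p
  induction p with
  | nil => intro hw ha _; exact absurd ha hw
  | @cons a b c h q ih =>
    intro hw ha hsupp
    by_cases hb : b ∈ S
    · refine ih hw hb (fun x hx => hsupp x ?_)
      simp [SimpleGraph.Walk.support_cons, hx]
    · have hrb : r < rank b := hcross a ha b hb h
      by_cases hbw : b = c
      · exact ⟨a, ha, hbw ▸ h⟩
      · have := hsupp b (by simp [SimpleGraph.Walk.support_cons]) hbw
        rcases this with h' | h'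
        · exact absurd h' hb
        · omega

/-- Let `H` be the contraction hierarchy obtained by contracting the
vertices of `G` in a nested dissection order induced by a separator decomposition.
For a node `X`, the boundary `B(X)` of `G_X` equals `N_H^↑(u)`, the set of higher-ranked
`H`-neighbors of the highest-ranked vertex `u` of `G_X`. -/
theorem stmt2 {V ι : Type*} (G H : SimpleGraph V) (parent : ι → ι) (bag : ι → Set V)
    (root : ι) (rank : V → ℕ) (hrank : Function.Injective rank)
    (hroot : ∀ Z, anc parent Z root)
    (hantisymm : ∀ Y Z, anc parent Y Z → anc parent Z Y → Y = Z)
    (hdisj : ∀ Y Z, Y ≠ Z → Disjoint (bag Y) (bag Z))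
    (hcover : ∀ v : V, ∃ Z, v ∈ bag Z)
    -- separator property: each node separates the subtrees of its distinct children
    (hsep : ∀ Z Y₁ Y₂, parent Y₁ = Z → parent Y₂ = Z → Y₁ ≠ Y₂ →
      ∀ a ∈ subVerts parent bag Y₁, ∀ b ∈ subVerts parent bag Y₂, ¬ G.Adj a b)
    -- postorder numbering property
    (hpost : ∀ X Z, anc parent X Z → X ≠ Z →
      ∀ v ∈ subVerts parent bag X, ∀ w ∈ bag Z, rank v < rank w)
    -- characterization of the contraction hierarchy `H` built from `G` by rank:
    -- `(a,b)` with `rank a < rank b` is an edge of `H` iff there is an `a`–`b` path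
    -- in `G` all of whose internal vertices have rank lower than `rank a`
    (hH : ∀ a b : V, rank a < rank b →
      (H.Adj a b ↔ ∃ p : G.Walk a b, ∀ x ∈ p.support, x ≠ a → x ≠ b → rank x < rank a))
    (X : ι) (u : V)
    (hu : u ∈ subVerts parent bag X)
    (humax : ∀ v ∈ subVerts parent bag X, v ≠ u → rank v < rank u)
    -- `G_X` is connected
    (hconn : ∀ v ∈ subVerts parent bag X,
      ∃ p : G.Walk v u, ∀ x ∈ p.support, x ∈ subVerts parent bag X) :
    {w | w ∉ subVerts parent bag X ∧ ∃ v ∈ subVerts parent bag X, G.Adj v w}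
      = {w | H.Adj u w ∧ rank u < rank w} := by
  set S := subVerts parent bag X with hS
  -- crossing lemma: any `G`-edge from `S` to outside goes to a vertex of rank > rank u
  have hcross : ∀ a ∈ S, ∀ b, b ∉ S → G.Adj a b → rank u < rank b := by
    intro a ha b hb hab
    obtain ⟨Z, hbZ⟩ := hcover b
    have hbsub : b ∈ subVerts parent bag Z := ⟨Z, Relation.ReflTransGen.refl, hbZ⟩
    have hZX : ¬ anc parent Z X := fun h => hb (subVerts_mono h hbsub)
    by_cases hXZ : anc parent X Z
    · have hne : X ≠ Z := by rintro rfl; exact hb hbsub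
      exact hpost X Z hXZ hne u hu b hbZ
    · obtain ⟨W, Y₁, Y₂, h1, h2, h3, h4, h5⟩ :=
        lca_lemma parent root X Z (hroot X) (hroot Z) hZX hXZ
      exact absurd hab (hsep W Y₁ Y₂ h1 h2 h3 a (subVerts_mono h4 ha)
        b (subVerts_mono h5 hbsub))
  ext w
  simp only [Set.mem_setOf_eq]
  constructor
  · rintro ⟨hw, v, hv, hvw⟩
    have hlt : rank u < rank w := hcross v hv w hw hvw
    refine ⟨(hH u w hlt).mpr ?_, hlt⟩
    obtain ⟨p, hp⟩ := hconn v hv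
    refine ⟨p.reverse.concat hvw, ?_⟩
    intro x hx hxu hxw
    rw [SimpleGraph.Walk.support_concat, List.mem_append] at hx
    rcases hx with hx | hx
    · rw [SimpleGraph.Walk.support_reverse, List.mem_reverse] at hx
      exact humax x (hp x hx) hxu
    · simp at hx; exact absurd hx hxw
  · rintro ⟨hadj, hlt⟩
    obtain ⟨p, hp⟩ := (hH u w hlt).mp hadj
    have hw : w ∉ S := by
      intro hwS
      have hne : w ≠ u := by rintro rfl; omega
      have := humax w hwS hne
      omega
    have : ∃ v ∈ S, G.Adj v w := by
      refine last_in_S hcross p hw hu ?_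
      intro x hx hxw
      by_cases hxu : x = u
      · exact Or.inl (hxu ▸ hu)
      · exact Or.inr (hp x hx hxu hxw)
    obtain ⟨v, hv, hvw⟩ := this
    exact ⟨hw, v, hv, hvw⟩
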